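/- Let u : ℝ³ → ℂ³ be a C² divergence-free vector field, q : ℝ³ → ℂ a C¹ function, and suppose curl(q⁻¹ curl u) = c·u for a constant c, with q nonvanishing. Then for each j ∈ {1,2,3}, ∇q ⋅ (curl u × e_j) = −q·Δu_j − q²·c·u_j pointwise. -/

import Mathlib

noncomputable def pd (f : (Fin 3 → ℝ) → ℂ) (i : Fin 3) (x : Fin 3 → ℝ) : ℂ :=
  fderiv ℝ f x (Pi.single i 1)

noncomputable def jacC (u : (Fin 3 → ℝ) → Fin 3 → ℂ) (x : Fin 3 → ℝ) :
    Matrix (Fin 3) (Fin 3) ℂ :=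
  Matrix.of fun i j => pd (fun y => u y i) j x

noncomputable def divC (u : (Fin 3 → ℝ) → Fin 3 → ℂ) (x : Fin 3 → ℝ) : ℂ :=
  ∑ i : Fin 3, pd (fun y => u y i) i x

noncomputable def curlC (u : (Fin 3 → ℝ) → Fin 3 → ℂ) (x : Fin 3 → ℝ) : Fin 3 → ℂ :=
  fun i => pd (fun y => u y (i + 2)) (i + 1) x - pd (fun y => u y (i + 1)) (i + 2) x

noncomputable def lapC (f : (Fin 3 → ℝ) → ℂ) (x : Fin 3 → ℝ) : ℂ :=
  ∑ i : Fin 3, pd (fun y => pd f i y) i x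

noncomputable def etaC (u v : (Fin 3 → ℝ) → Fin 3 → ℂ) (x : Fin 3 → ℝ) : Fin 3 → ℂ :=
  Matrix.mulVec (jacC u x) (v x) - Matrix.mulVec (jacC v x) (u x)
    + divC u x • v x - divC v x • u x
    - (2 : ℂ) • Matrix.mulVec (Matrix.transpose (jacC u x)) (v x)
    + (2 : ℂ) • Matrix.mulVec (Matrix.transpose (jacC v x)) (u x)

noncomputable def gammaC (u v : (Fin 3 → ℝ) → Fin 3 → ℂ) (x : Fin 3 → ℝ) : ℂ :=
  dotProduct (fun i => pd (fun y => divC u y) i x) (v x)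
    - dotProduct (fun i => pd (fun y => divC v y) i x) (u x)
    - dotProduct (fun i => lapC (fun y => u y i) x) (v x)
    + dotProduct (fun i => lapC (fun y => v y i) x) (u x)

lemma pd_sub' {f g : (Fin 3 → ℝ) → ℂ} {x : Fin 3 → ℝ} (i : Fin 3)
    (hf : DifferentiableAt ℝ f x) (hg : DifferentiableAt ℝ g x) :
    pd (fun y => f y - g y) i x = pd f i x - pd g i x := by
  unfold pd; rw [fderiv_fun_sub hf hg]; rfl

lemma pd_neg' {f : (Fin 3 → ℝ) → ℂ} {x : Fin 3 → ℝ} (i : Fin 3) :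
    pd (fun y => -f y) i x = -pd f i x := by
  unfold pd; rw [fderiv_fun_neg]; rfl

lemma pd_mul' {f g : (Fin 3 → ℝ) → ℂ} {x : Fin 3 → ℝ} (i : Fin 3)
    (hf : DifferentiableAt ℝ f x) (hg : DifferentiableAt ℝ g x) :
    pd (fun y => f y * g y) i x = f x * pd g i x + pd f i x * g x := by
  unfold pd; rw [fderiv_fun_mul hf hg]
  simp [smul_eq_mul]; ring

lemma contDiff_pd' {f : (Fin 3 → ℝ) → ℂ} (hf : ContDiff ℝ 2 f) (i : Fin 3) :
    ContDiff ℝ 1 fun y => pd f i y := by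
  have h1 : ContDiff ℝ 1 (fderiv ℝ f) := hf.fderiv_right (by norm_num)
  exact (ContinuousLinearMap.apply ℝ ℂ ((Pi.single i 1 : Fin 3 → ℝ))).contDiff.comp h1

lemma pd_swap' {f : (Fin 3 → ℝ) → ℂ} (hf : ContDiff ℝ 2 f) (a b : Fin 3) (x : Fin 3 → ℝ) :
    pd (fun y => pd f a y) b x = pd (fun y => pd f b y) a x := by
  have hd : DifferentiableAt ℝ (fderiv ℝ f) x :=
    ((hf.fderiv_right (m := 1) (le_refl 2)).differentiable one_ne_zero) x
  have h1 : ∀ (v w : Fin 3 → ℝ), fderiv ℝ (fun y => fderiv ℝ f y v) x w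
      = fderiv ℝ (fderiv ℝ f) x w v := by
    intro v w
    rw [fderiv_clm_apply hd (differentiableAt_const v)]
    simp
  have hsymm : IsSymmSndFDerivAt ℝ f x :=
    (hf.contDiffAt).isSymmSndFDerivAt (by simp [minSmoothness_of_isRCLikeNormedField])
  unfold pd
  rw [h1, h1, hsymm.eq]

lemma pd_inv' {q : (Fin 3 → ℝ) → ℂ} (hq : ContDiff ℝ 1 q) (hq0 : ∀ y, q y ≠ 0)
    (i : Fin 3) (x : Fin 3 → ℝ) :
    pd (fun y => (q y)⁻¹) i x = -(pd q i x) / (q x) ^ 2 := by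
  have hqd : DifferentiableAt ℝ q x := (hq.differentiable one_ne_zero) x
  have hqi : DifferentiableAt ℝ (fun y => (q y)⁻¹) x := hqd.inv (hq0 x)
  have h1 : pd (fun y => q y * (q y)⁻¹) i x = 0 := by
    have h2 : (fun y => q y * (q y)⁻¹) = fun _ => (1 : ℂ) :=
      funext fun y => mul_inv_cancel₀ (hq0 y)
    rw [pd, h2, fderiv_const_apply]; simp
  rw [pd_mul' i hqd hqi] at h1
  have hQ := hq0 x
  field_simp at h1 ⊢
  linear_combination h1

lemma key' (u : (Fin 3 → ℝ) → Fin 3 → ℂ) (q : (Fin 3 → ℝ) → ℂ) (c : ℂ)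
    (hu : ContDiff ℝ 2 u) (hq : ContDiff ℝ 1 q) (hq0 : ∀ x, q x ≠ 0)
    (x : Fin 3 → ℝ) (j j1 j2 : Fin 3)
    (e1 : j + 1 = j1) (e2 : j + 2 = j2)
    (e3 : j1 + 1 = j2) (e4 : j1 + 2 = j)
    (e5 : j2 + 1 = j) (e6 : j2 + 2 = j1)
    (hsum : ∀ y, pd (fun z => u z j) j y + pd (fun z => u z j1) j1 y
        + pd (fun z => u z j2) j2 y = 0)
    (hlap : lapC (fun y => u y j) x
        = pd (fun y => pd (fun z => u z j) j y) j x
          + pd (fun y => pd (fun z => u z j) j1 y) j1 x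
          + pd (fun y => pd (fun z => u z j) j2 y) j2 x)
    (heqj : curlC (fun y => (q y)⁻¹ • curlC u y) x j = c * u x j) :
    pd q j1 x * curlC u x j2 - pd q j2 x * curlC u x j1
      = -(q x) * lapC (fun y => u y j) x - (q x) ^ 2 * c * u x j := by
  have hui : ∀ i, ContDiff ℝ 2 fun y => u y i := fun i =>
    (ContinuousLinearMap.proj (R := ℝ) (φ := fun _ : Fin 3 => ℂ) i).contDiff.comp hu
  have hpd : ∀ m n, ContDiff ℝ 1 fun y => pd (fun z => u z m) n y := fun m n =>
    contDiff_pd' (hui m) n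
  have hcurl2 : (fun y => curlC u y j2)
      = fun y => pd (fun z => u z j1) j y - pd (fun z => u z j) j1 y := by
    funext y; show pd (fun z => u z (j2+2)) (j2+1) y - pd (fun z => u z (j2+1)) (j2+2) y = _
    rw [e5, e6]
  have hcurl1 : (fun y => curlC u y j1)
      = fun y => pd (fun z => u z j) j2 y - pd (fun z => u z j2) j y := by
    funext y; show pd (fun z => u z (j1+2)) (j1+1) y - pd (fun z => u z (j1+1)) (j1+2) y = _
    rw [e3, e4]
  have hdc2 : DifferentiableAt ℝ (fun y => curlC u y j2) x := by
    rw [hcurl2]; exact (((hpd j1 j).sub (hpd j j1)).differentiable one_ne_zero) x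
  have hdc1 : DifferentiableAt ℝ (fun y => curlC u y j1) x := by
    rw [hcurl1]; exact (((hpd j j2).sub (hpd j2 j)).differentiable one_ne_zero) x
  have hqinv : DifferentiableAt ℝ (fun y => (q y)⁻¹) x :=
    ((hq.differentiable one_ne_zero) x).inv (hq0 x)
  have H : pd (fun y => (q y)⁻¹ * curlC u y j2) j1 x
      - pd (fun y => (q y)⁻¹ * curlC u y j1) j2 x = c * u x j := by
    calc pd (fun y => (q y)⁻¹ * curlC u y j2) j1 x
        - pd (fun y => (q y)⁻¹ * curlC u y j1) j2 x
        = curlC (fun y => (q y)⁻¹ • curlC u y) x j := by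
          show _ = pd (fun y => ((q y)⁻¹ • curlC u y) (j+2)) (j+1) x
            - pd (fun y => ((q y)⁻¹ • curlC u y) (j+1)) (j+2) x
          rw [e1, e2]; rfl
      _ = c * u x j := heqj
  rw [pd_mul' j1 hqinv hdc2, pd_mul' j2 hqinv hdc1, pd_inv' hq hq0 j1 x, pd_inv' hq hq0 j2 x,
    hcurl2, hcurl1] at H
  rw [pd_sub' j1 (((hpd j1 j).differentiable one_ne_zero) x) (((hpd j j1).differentiable one_ne_zero) x),
    pd_sub' j2 (((hpd j j2).differentiable one_ne_zero) x) (((hpd j2 j).differentiable one_ne_zero) x),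
    pd_swap' (hui j1) j j1 x, pd_swap' (hui j2) j j2 x] at H
  have hdivj : pd (fun y => pd (fun z => u z j1) j1 y) j x
      + pd (fun y => pd (fun z => u z j2) j2 y) j x
      = -pd (fun y => pd (fun z => u z j) j y) j x := by
    have hfun : (fun y => pd (fun z => u z j1) j1 y)
        = fun y => (-pd (fun z => u z j) j y) - pd (fun z => u z j2) j2 y := by
      funext y; linear_combination hsum y
    rw [hfun, pd_sub' j (((hpd j j).neg).differentiable one_ne_zero x)
      (((hpd j2 j2).differentiable one_ne_zero) x), pd_neg']
    ring
  have hw2 : curlC u x j2 = pd (fun z => u z j1) j x - pd (fun z => u z j) j1 x :=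
    congrFun hcurl2 x
  have hw1 : curlC u x j1 = pd (fun z => u z j) j2 x - pd (fun z => u z j2) j x :=
    congrFun hcurl1 x
  rw [hw2, hw1, hlap]
  have hQ := hq0 x
  rw [hw2, hw1] at H
  field_simp at H
  apply mul_left_cancel₀ hQ
  linear_combination (-(q x)) * H + (q x) ^ 2 * hdivj

theorem stmt12 (u : (Fin 3 → ℝ) → Fin 3 → ℂ) (q : (Fin 3 → ℝ) → ℂ) (c : ℂ)
    (hu : ContDiff ℝ 2 u) (hq : ContDiff ℝ 1 q)
    (hdiv : ∀ x, divC u x = 0) (hq0 : ∀ x, q x ≠ 0)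
    (heq : ∀ x, curlC (fun y => (q y)⁻¹ • curlC u y) x = c • u x) :
    ∀ x (j : Fin 3),
      dotProduct (fun i => pd q i x) (crossProduct (curlC u x) (Pi.single j 1))
        = -(q x) * lapC (fun y => u y j) x - (q x) ^ 2 * c * u x j := by
  intro x j
  have hdiv' : ∀ y, pd (fun z => u z 0) 0 y + pd (fun z => u z 1) 1 y
      + pd (fun z => u z 2) 2 y = 0 := by
    intro y; have h := hdiv y
    simpa [divC, Fin.sum_univ_three] using h
  have hlap' : ∀ (m : Fin 3), lapC (fun y => u y m) x
      = pd (fun y => pd (fun z => u z m) 0 y) 0 x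
        + pd (fun y => pd (fun z => u z m) 1 y) 1 x
        + pd (fun y => pd (fun z => u z m) 2 y) 2 x := by
    intro m; simp [lapC, Fin.sum_univ_three]
  have hj : j = 0 ∨ j = 1 ∨ j = 2 := by omega
  rcases hj with rfl | rfl | rfl
  · have h := key' u q c hu hq hq0 x 0 1 2 (by decide) (by decide) (by decide) (by decide)
      (by decide) (by decide) (fun y => by linear_combination hdiv' y) (hlap' 0)
      (by simpa using congrFun (heq x) 0)
    simp [dotProduct, Fin.sum_univ_three, cross_apply, Pi.single_apply]
    linear_combination h
  · have h := key' u q c hu hq hq0 x 1 2 0 (by decide) (by decide) (by decide) (by decide)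
      (by decide) (by decide) (fun y => by linear_combination hdiv' y) (by
        rw [hlap' 1]; ring)
      (by simpa using congrFun (heq x) 1)
    simp [dotProduct, Fin.sum_univ_three, cross_apply, Pi.single_apply]
    linear_combination h
  · have h := key' u q c hu hq hq0 x 2 0 1 (by decide) (by decide) (by decide) (by decide)
      (by decide) (by decide) (fun y => by linear_combination hdiv' y) (by
        rw [hlap' 2]; ring)
      (by simpa using congrFun (heq x) 2)
    simp [dotProduct, Fin.sum_univ_three, cross_apply, Pi.single_apply]
    linear_combination h
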